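/- If Γ ⊂ ℤⁿ is a weakly almost periodic set and S ⊂ ℝⁿ is a centrally symmetric convex body, then ∑_{u∈S} ρ_Γ(u) ≥ D(Γ)·#(S/2 ∩ ℤⁿ). -/

import Mathlib

open Filter MeasureTheory Metric Pointwise

variable {E : Type*} [NormedAddCommGroup E] [MeasureSpace E]

/-- The uniform `R`-density of a set. -/
noncomputable def densR (Γ : Set E) (R : ℝ) : ℝ :=
  ⨆ x : E, ((Γ ∩ ball x R).ncard : ℝ) / (volume (ball x R)).toReal

/-- The uniform upper density of a set. -/
noncomputable def upDens (Γ : Set E) : ℝ := limsup (densR Γ) atTop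

/-- Uniformly discrete: balls of radius `r` contain at most one point. -/
def UnifDisc (Γ : Set E) : Prop := ∃ r > 0, ∀ x : E, (Γ ∩ closedBall x r).Subsingleton

/-- Relatively dense: balls of radius `R` contain at least one point. -/
def RelDense (Γ : Set E) : Prop := ∃ R > 0, ∀ x : E, (Γ ∩ closedBall x R).Nonempty

def Delone (Γ : Set E) : Prop := UnifDisc Γ ∧ RelDense Γ

def Meyer (Γ : Set E) : Prop := Delone Γ ∧ Delone (Γ - Γ)

/-- Frequency of the difference `v` in `Γ`. -/
noncomputable def freq (Γ : Set E) (v : E) : ℝ :=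
  upDens {x ∈ Γ | x + v ∈ Γ} / upDens Γ

/-- Weakly almost periodic set. -/
def WAP (Γ : Set E) : Prop :=
  Delone Γ ∧ ∀ ε > 0, ∃ R > 0, ∀ x y : E, ∃ v : E,
    ((symmDiff (Γ ∩ ball x R) ((fun z => z - v) '' (Γ ∩ ball y R))).ncard : ℝ)
      ≤ ε * (volume (ball (0 : E) R)).toReal


open scoped ENNReal

namespace MinkWAP

variable {n : ℕ}

abbrev Esp (n : ℕ) := EuclideanSpace ℝ (Fin n)

def Lat (n : ℕ) : Set (Esp n) := {x | ∀ i, ∃ m : ℤ, x i = (m : ℝ)}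

lemma lat_sub {x y : Esp n} (hx : x ∈ Lat n) (hy : y ∈ Lat n) : x - y ∈ Lat n := fun i => by
  obtain ⟨a, ha⟩ := hx i; obtain ⟨b, hb⟩ := hy i
  exact ⟨a - b, by show x i - y i = _; rw [ha, hb]; push_cast; ring⟩

lemma lat_eq_of_close {x y : Esp n} (hx : x ∈ Lat n) (hy : y ∈ Lat n)
    (h : ∀ i, |x i - y i| < 1) : x = y := PiLp.ext fun i => by
  obtain ⟨a, ha⟩ := hx i; obtain ⟨b, hb⟩ := hy i
  have h1 := h i
  rw [ha, hb] at h1 ⊢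
  have h2 : |((a - b : ℤ) : ℝ)| < 1 := by push_cast; exact h1
  have h3 : |a - b| < 1 := by exact_mod_cast h2
  have h4 : a = b := by rw [abs_lt] at h3; omega
  rw [h4]

lemma abs_coord_le (x : Esp n) (i : Fin n) : |x i| ≤ ‖x‖ := by
  rw [EuclideanSpace.norm_eq, ← Real.sqrt_sq_eq_abs]
  apply Real.sqrt_le_sqrt
  calc x i ^ 2 = ‖x i‖ ^ 2 := by rw [Real.norm_eq_abs, sq_abs]
  _ ≤ ∑ j, ‖x j‖ ^ 2 := Finset.single_le_sum (f := fun j => ‖x j‖ ^ 2)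
      (fun j _ => sq_nonneg _) (Finset.mem_univ i)

lemma norm_lt_of_ball {x y : Esp n} {r : ℝ} (h : y ∈ ball x r) : ‖y‖ < ‖x‖ + r := by
  have h1 : dist y x < r := mem_ball.mp h
  have h2 : ‖y‖ - ‖x‖ ≤ ‖y - x‖ := norm_sub_norm_le y x
  rw [← dist_eq_norm] at h2
  linarith

lemma lat_finite_inter_ball (x : Esp n) (r : ℝ) : (Lat n ∩ ball x r).Finite := by
  classical
  set K : ℤ := ⌈‖x‖ + r⌉ with hK
  have hsub : (fun (y : Esp n) (i : Fin n) => ⌊y i⌋) '' (Lat n ∩ ball x r) ⊆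
      Set.univ.pi (fun _ => Set.Icc (-K) K) := by
    rintro v ⟨y, ⟨hyl, hyb⟩, rfl⟩ i _
    obtain ⟨m, hm⟩ := hyl i
    have h1 : |y i| ≤ ‖y‖ := abs_coord_le y i
    have h2 : ‖y‖ < ‖x‖ + r := norm_lt_of_ball hyb
    have h3 : |(m : ℝ)| ≤ (K : ℝ) := by
      rw [← hm]; exact le_trans (le_of_lt (lt_of_le_of_lt h1 h2)) (Int.le_ceil _)
    have h4 : |m| ≤ K := by exact_mod_cast h3
    simp only [hm, Int.floor_intCast, Set.mem_Icc]
    exact abs_le.mp h4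
  have hfin : ((fun (y : Esp n) (i : Fin n) => ⌊y i⌋) '' (Lat n ∩ ball x r)).Finite :=
    Set.Finite.subset (Set.Finite.pi fun _ => Set.finite_Icc _ _) hsub
  refine Set.Finite.of_finite_image hfin ?_
  rintro y ⟨hyl, -⟩ z ⟨hzl, -⟩ hf
  apply PiLp.ext; intro i
  obtain ⟨a, ha⟩ := hyl i; obtain ⟨b, hb⟩ := hzl i
  have h5 : ⌊y i⌋ = ⌊z i⌋ := congrFun hf i
  rw [ha, hb, Int.floor_intCast, Int.floor_intCast] at h5
  rw [ha, hb, h5]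

def Cube (z : Esp n) : Set (Esp n) := {y | ∀ i, y i ∈ Set.Ico (z i - 2⁻¹) (z i + 2⁻¹)}

lemma cube_eq_preimage (z : Esp n) : Cube z =
    (MeasurableEquiv.toLp 2 (Fin n → ℝ)).symm ⁻¹'
      (Set.univ.pi fun i => Set.Ico (z i - 2⁻¹) (z i + 2⁻¹)) := by
  ext y; simp [Cube, MeasurableEquiv.toLp_symm_apply, Set.mem_pi]

lemma cube_measurable (z : Esp n) : MeasurableSet (Cube z) := by
  rw [cube_eq_preimage]
  exact (MeasurableEquiv.toLp 2 (Fin n → ℝ)).symm.measurable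
    (MeasurableSet.univ_pi fun i => measurableSet_Ico)

lemma cube_volume (z : Esp n) : volume (Cube z) = 1 := by
  rw [cube_eq_preimage,
    (EuclideanSpace.volume_preserving_symm_measurableEquiv_toLp (Fin n)).measure_preimage
      (MeasurableSet.univ_pi fun i => measurableSet_Ico).nullMeasurableSet,
    volume_pi_pi]
  have h : ∀ i : Fin n, volume (Set.Ico (z i - 2⁻¹) (z i + 2⁻¹)) = 1 := by
    intro i
    rw [Real.volume_Ico]
    have h2 : z i + 2⁻¹ - (z i - 2⁻¹) = 1 := by ring
    rw [h2, ENNReal.ofReal_one]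
  rw [Finset.prod_congr rfl (fun i _ => h i), Finset.prod_const_one]

lemma cube_disjoint {z w : Esp n} (hz : z ∈ Lat n) (hw : w ∈ Lat n) (hne : z ≠ w) :
    Disjoint (Cube z) (Cube w) := by
  rw [Set.disjoint_left]
  rintro y hy hy'
  apply hne
  apply lat_eq_of_close hz hw
  intro i
  have h1 := hy i; have h2 := hy' i
  simp only [Set.mem_Ico] at h1 h2
  rw [abs_sub_lt_iff]
  constructor <;> linarith

lemma cube_subset_ball {z x : Esp n} {r : ℝ} (hz : z ∈ ball x r) :
    Cube z ⊆ ball x (r + (Real.sqrt n + 1)) := by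
  intro y hy
  have hd : dist y z ≤ Real.sqrt n := by
    rw [EuclideanSpace.dist_eq]
    have h1 : ∑ i, dist (y i) (z i) ^ 2 ≤ (n : ℝ) := by
      have h2 : ∀ i : Fin n, dist (y i) (z i) ^ 2 ≤ (1 : ℝ) := by
        intro i
        have h3 := hy i
        simp only [Set.mem_Ico] at h3
        have habs : |y i - z i| ≤ 1 := by rw [abs_sub_le_iff]; constructor <;> linarith
        calc dist (y i) (z i) ^ 2 = |y i - z i| ^ 2 := by rw [Real.dist_eq]
          _ ≤ 1 ^ 2 := by apply pow_le_pow_left₀ (abs_nonneg _) habs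
          _ = 1 := one_pow 2
      calc ∑ i, dist (y i) (z i) ^ 2 ≤ ∑ _i : Fin n, (1 : ℝ) :=
            Finset.sum_le_sum fun i _ => h2 i
        _ = (n : ℝ) := by simp
    exact Real.sqrt_le_sqrt h1
  have h4 : dist z x < r := mem_ball.mp hz
  have h5 : dist y x ≤ dist y z + dist z x := dist_triangle _ _ _
  have h6 : (0 : ℝ) ≤ Real.sqrt n := Real.sqrt_nonneg _
  rw [mem_ball]
  linarith

lemma vol_ball_ne_top (x : Esp n) (r : ℝ) : volume (ball x r) ≠ ⊤ := by
  cases n with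
  | zero =>
      rw [volume_euclideanSpace_eq_dirac]
      exact ne_top_of_le_ne_top (by simp) prob_le_one
  | succ m => exact measure_ball_lt_top.ne

lemma lat_card_le (Γ' : Set (Esp n)) (hΓ' : Γ' ⊆ Lat n) (x : Esp n) (r : ℝ) :
    ((Γ' ∩ ball x r).ncard : ℝ) ≤ (volume (ball x (r + (Real.sqrt n + 1)))).toReal := by
  classical
  have hfin : (Γ' ∩ ball x r).Finite :=
    (lat_finite_inter_ball x r).subset (Set.inter_subset_inter_left _ hΓ')
  set Z := hfin.toFinset with hZdef
  have hcard : (Γ' ∩ ball x r).ncard = Z.card := Set.ncard_eq_toFinset_card _ hfin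
  have hsub : ∀ z ∈ Z, z ∈ Lat n ∩ ball x r := by
    intro z hz
    rw [hZdef, Set.Finite.mem_toFinset] at hz
    exact ⟨hΓ' hz.1, hz.2⟩
  -- disjoint cubes
  have hdisj : Set.PairwiseDisjoint (↑Z : Set (Esp n)) Cube := by
    intro z hz w hw hne
    exact cube_disjoint (hsub z (by exact_mod_cast hz)).1 (hsub w (by exact_mod_cast hw)).1 hne
  have hmeas : ∀ z ∈ Z, MeasurableSet (Cube z) := fun z _ => cube_measurable z
  have hunion : (⋃ z ∈ Z, Cube z) ⊆ ball x (r + (Real.sqrt n + 1)) := by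
    intro y hy
    rw [Set.mem_iUnion₂] at hy
    obtain ⟨z, hz, hyz⟩ := hy
    exact cube_subset_ball (hsub z hz).2 hyz
  have key : (Z.card : ℝ≥0∞) ≤ volume (ball x (r + (Real.sqrt n + 1))) := by
    calc (Z.card : ℝ≥0∞) = ∑ z ∈ Z, volume (Cube z) := by
          rw [Finset.sum_congr rfl (fun z _ => cube_volume z), Finset.sum_const, nsmul_eq_mul,
            mul_one]
      _ = volume (⋃ z ∈ Z, Cube z) := (measure_biUnion_finset hdisj hmeas).symm
      _ ≤ volume (ball x (r + (Real.sqrt n + 1))) := measure_mono hunion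
  rw [hcard]
  have := ENNReal.toReal_mono (vol_ball_ne_top x _) key
  simpa using this




lemma ball_zero_eq_univ (x : Esp 0) {r : ℝ} (hr : 0 < r) : ball x r = Set.univ := by
  ext y
  simp only [mem_ball, Set.mem_univ, iff_true]
  have : Subsingleton (Esp 0) := ⟨fun a b => PiLp.ext fun i => Fin.elim0 i⟩
  rw [Subsingleton.elim y x, dist_self]
  exact hr

lemma vol_ball_center (x : Esp n) (r : ℝ) :
    volume (ball x r) = volume (ball (0 : Esp n) r) := by
  cases n with
  | zero =>
      have : Subsingleton (Esp 0) := ⟨fun a b => PiLp.ext fun i => Fin.elim0 i⟩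
      rw [Subsingleton.elim x (0 : Esp 0)]
  | succ m => exact Measure.addHaar_ball_center _ _ _

lemma vol_ball_formula (x : Esp n) {r : ℝ} (hr : 0 < r) :
    volume (ball x r) = ENNReal.ofReal (r ^ n) * volume (ball (0 : Esp n) 1) := by
  cases n with
  | zero =>
      rw [ball_zero_eq_univ x hr, ball_zero_eq_univ 0 one_pos]
      simp
  | succ m =>
      rw [Measure.addHaar_ball volume x hr.le, finrank_euclideanSpace_fin]

lemma vol_unit_pos : 0 < (volume (ball (0 : Esp n) 1)).toReal := by
  apply ENNReal.toReal_pos _ (vol_ball_ne_top _ _)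
  cases n with
  | zero =>
      rw [ball_zero_eq_univ 0 one_pos, volume_euclideanSpace_eq_dirac]
      simp
  | succ m => exact (measure_ball_pos _ _ one_pos).ne'

/-- The normalized volume of the unit ball. -/
noncomputable def ubv (n : ℕ) : ℝ := (volume (ball (0 : Esp n) 1)).toReal

lemma ubv_pos : 0 < ubv n := vol_unit_pos

lemma vol_ball_toReal (x : Esp n) {r : ℝ} (hr : 0 < r) :
    (volume (ball x r)).toReal = r ^ n * ubv n := by
  rw [vol_ball_formula x hr, ENNReal.toReal_mul, ENNReal.toReal_ofReal (by positivity)]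
  rfl

lemma vol_ball_toReal_pos (x : Esp n) {r : ℝ} (hr : 0 < r) :
    0 < (volume (ball x r)).toReal := by
  rw [vol_ball_toReal x hr]
  have := ubv_pos (n := n)
  positivity

/-- `c₁ = √n + 1`, the enlargement constant for lattice counting. -/
noncomputable def cc (n : ℕ) : ℝ := Real.sqrt n + 1

lemma cc_pos : 0 < cc n := by
  have : (0:ℝ) ≤ Real.sqrt n := Real.sqrt_nonneg _
  unfold cc; linarith

/-- Lower bound on `densR` by the count at any given center. -/
lemma densR_ge (Γ' : Set (Esp n)) (hΓ' : Γ' ⊆ Lat n) (R : ℝ) (x : Esp n) :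
    ((Γ' ∩ ball x R).ncard : ℝ) / (volume (ball x R)).toReal ≤ densR Γ' R := by
  apply le_ciSup (f := fun y : Esp n =>
    ((Γ' ∩ ball y R).ncard : ℝ) / (volume (ball y R)).toReal)
  refine ⟨(volume (ball (0 : Esp n) (R + cc n))).toReal / (volume (ball (0 : Esp n) R)).toReal,
    ?_⟩
  rintro v ⟨y, rfl⟩
  show ((Γ' ∩ ball y R).ncard : ℝ) / (volume (ball y R)).toReal ≤ _
  rcases le_or_gt R 0 with hR | hR
  · have : ball y R = ∅ := ball_eq_empty.mpr hR
    simp [this]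
    positivity
  · have h1 : ((Γ' ∩ ball y R).ncard : ℝ) ≤ (volume (ball y (R + cc n))).toReal :=
      lat_card_le Γ' hΓ' y R
    rw [vol_ball_center y (R + cc n)] at h1
    rw [vol_ball_center y R]
    exact div_le_div_of_nonneg_right h1 (vol_ball_toReal_pos 0 hR).le

lemma densR_nonneg (Γ' : Set (Esp n)) (R : ℝ) : 0 ≤ densR Γ' R :=
  Real.iSup_nonneg fun x => by positivity

lemma densR_le (Γ' : Set (Esp n)) (hΓ' : Γ' ⊆ Lat n) (R : ℝ) :
    densR Γ' R ≤ (volume (ball (0 : Esp n) (R + cc n))).toReal /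
      (volume (ball (0 : Esp n) R)).toReal := by
  apply ciSup_le
  intro y
  rcases le_or_gt R 0 with hR | hR
  · have : ball y R = ∅ := ball_eq_empty.mpr hR
    simp [this]
    positivity
  · have h1 : ((Γ' ∩ ball y R).ncard : ℝ) ≤ (volume (ball y (R + cc n))).toReal :=
      lat_card_le Γ' hΓ' y R
    rw [vol_ball_center y (R + cc n)] at h1
    rw [vol_ball_center y R]
    exact div_le_div_of_nonneg_right h1 (vol_ball_toReal_pos 0 hR).le

lemma densR_le_const (Γ' : Set (Esp n)) (hΓ' : Γ' ⊆ Lat n) {R : ℝ} (hR : 1 ≤ R) :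
    densR Γ' R ≤ (1 + cc n) ^ n := by
  have hR0 : 0 < R := lt_of_lt_of_le one_pos hR
  have hRc : 0 < R + cc n := by have := cc_pos (n := n); linarith
  refine (densR_le Γ' hΓ' R).trans ?_
  rw [vol_ball_toReal 0 hR0, vol_ball_toReal 0 hRc]
  rw [mul_div_mul_right _ _ (ubv_pos (n := n)).ne']
  rw [← div_pow]
  apply pow_le_pow_left₀ (by positivity)
  rw [div_le_iff₀ hR0]
  have h1 : cc n ≤ cc n * R := le_mul_of_one_le_right cc_pos.le hR
  linarith

lemma densR_boundedUnder (Γ' : Set (Esp n)) (hΓ' : Γ' ⊆ Lat n) :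
    IsBoundedUnder (· ≤ ·) atTop (densR Γ') := by
  refine ⟨(1 + cc n) ^ n, eventually_map.mpr ?_⟩
  filter_upwards [eventually_ge_atTop (1:ℝ)] with R hR
  exact densR_le_const Γ' hΓ' hR

lemma upDens_nonneg (Γ' : Set (Esp n)) (hΓ' : Γ' ⊆ Lat n) : 0 ≤ upDens Γ' :=
  le_limsup_of_frequently_le (Frequently.of_forall fun R => densR_nonneg Γ' R)
    (densR_boundedUnder Γ' hΓ')

lemma upDens_empty : upDens (∅ : Set (Esp n)) = 0 := by
  unfold upDens
  have h : densR (∅ : Set (Esp n)) = fun _ => (0:ℝ) := by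
    funext R
    unfold densR
    simp [Set.empty_inter]
  rw [h]
  exact limsup_const 0

lemma lat_add {x y : Esp n} (hx : x ∈ Lat n) (hy : y ∈ Lat n) : x + y ∈ Lat n := fun i => by
  obtain ⟨a, ha⟩ := hx i; obtain ⟨b, hb⟩ := hy i
  exact ⟨a + b, by show x i + y i = _; rw [ha, hb]; push_cast; ring⟩

/-- Core Cauchy–Schwarz / pigeonhole counting inequality. -/
lemma count_core {G : Type*} [AddCommGroup G] [DecidableEq G]
    (A T' Z F' : Finset G)
    (hAT : ∀ a ∈ A, ∀ t ∈ T', a + t ∈ Z)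
    (hsub : ∀ t ∈ T', ∀ t' ∈ T', t' - t ∈ F')
    (hT : T'.Nonempty) :
    ((A.card : ℝ) * T'.card) ^ 2 ≤
      (Z.card : ℝ) * T'.card * ∑ u ∈ F', ((A.filter fun b => b + u ∈ A).card : ℝ) := by
  classical
  set P := A ×ˢ T' with hP
  have hPZ : ∀ p ∈ P, p.1 + p.2 ∈ Z := fun p hp => by
    rw [hP, Finset.mem_product] at hp; exact hAT _ hp.1 _ hp.2
  have h1 : P.card = ∑ z ∈ Z, (P.filter fun p => p.1 + p.2 = z).card :=
    Finset.card_eq_sum_card_fiberwise hPZ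
  set Q := (P ×ˢ P).filter (fun pq => pq.1.1 + pq.1.2 = pq.2.1 + pq.2.2) with hQ
  have h2a : Q.card = ∑ z ∈ Z, ((P.filter fun p => p.1 + p.2 = z).card) ^ 2 := by
    have hkey : Q.card = ∑ z ∈ Z, (Q.filter fun pq => pq.1.1 + pq.1.2 = z).card :=
      Finset.card_eq_sum_card_fiberwise (fun pq hpq => by
        rw [hQ, Finset.mem_coe, Finset.mem_filter] at hpq
        rw [Finset.mem_product] at hpq
        exact hPZ _ hpq.1.1)
    rw [hkey]
    refine Finset.sum_congr rfl fun z _ => ?_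
    rw [sq, ← Finset.card_product]
    congr 1
    ext pq
    simp only [hQ, Finset.mem_filter, Finset.mem_product]
    constructor
    · rintro ⟨⟨⟨hp1, hp2⟩, heq⟩, hz1⟩
      exact ⟨⟨hp1, hz1⟩, hp2, heq ▸ hz1⟩
    · rintro ⟨⟨hp1, hz1⟩, hp2, hz2⟩
      exact ⟨⟨⟨hp1, hp2⟩, hz1.trans hz2.symm⟩, hz1⟩
  have h2b : Q.card = ∑ t ∈ T', ∑ t' ∈ T', (A.filter fun b => b + (t' - t) ∈ A).card := by
    have hkey : Q.card = ∑ tt ∈ T' ×ˢ T', (Q.filter fun pq => (pq.1.2, pq.2.2) = tt).card :=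
      Finset.card_eq_sum_card_fiberwise (fun pq hpq => by
        rw [hQ, Finset.mem_coe, Finset.mem_filter] at hpq
        obtain ⟨hmem, -⟩ := hpq
        rw [Finset.mem_product] at hmem
        obtain ⟨ha', hb'⟩ := hmem
        rw [hP, Finset.mem_product] at ha' hb'
        rw [Finset.mem_coe, Finset.mem_product]
        exact ⟨ha'.2, hb'.2⟩)
    rw [hkey, Finset.sum_product]
    refine Finset.sum_congr rfl fun t ht => Finset.sum_congr rfl fun t' ht' => ?_
    apply Finset.card_bij' (fun pq _ => pq.2.1) (fun b _ => ((b + (t' - t), t), (b, t')))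
    · rintro ⟨⟨a, s⟩, ⟨a', s'⟩⟩ hpq
      simp only [hQ, hP, Finset.mem_filter, Finset.mem_product, Prod.mk.injEq] at hpq
      obtain ⟨⟨⟨⟨haA, hsT⟩, ha'A, hs'T⟩, heq⟩, h1', h2'⟩ := hpq
      have heq' : a + t = a' + t' := by rw [← h1', ← h2']; exact heq
      have hrw : a' + (t' - t) = a := by rw [← add_sub_assoc, ← heq', add_sub_cancel_right]
      simp only [Finset.mem_filter]
      exact ⟨ha'A, by rw [hrw]; exact haA⟩
    · rintro b hb
      simp only [Finset.mem_filter] at hb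
      simp only [hQ, hP, Finset.mem_filter, Finset.mem_product, Prod.mk.injEq]
      exact ⟨⟨⟨⟨hb.2, ht⟩, hb.1, ht'⟩, by abel⟩, trivial, trivial⟩
    · rintro ⟨⟨a, s⟩, ⟨a', s'⟩⟩ hpq
      simp only [hQ, hP, Finset.mem_filter, Finset.mem_product, Prod.mk.injEq] at hpq
      obtain ⟨⟨⟨⟨haA, hsT⟩, ha'A, hs'T⟩, heq⟩, h1', h2'⟩ := hpq
      have heq' : a + t = a' + t' := by rw [← h1', ← h2']; exact heq
      have hrw : a' + (t' - t) = a := by rw [← add_sub_assoc, ← heq', add_sub_cancel_right]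
      simp only [Prod.mk.injEq]
      exact ⟨⟨hrw, h1'.symm⟩, trivial, h2'.symm⟩
    · rintro b hb; rfl
  have hcs : ((P.card : ℝ)) ^ 2 ≤ (Z.card : ℝ) * (Q.card : ℝ) := by
    rw [h1, h2a]
    push_cast
    exact sq_sum_le_card_mul_sum_sq
  obtain ⟨t0, ht0, hmax⟩ := T'.exists_max_image
    (fun t => ∑ t' ∈ T', (A.filter fun b => b + (t' - t) ∈ A).card) hT
  have h6 : Q.card ≤ T'.card * ∑ t' ∈ T', (A.filter fun b => b + (t' - t0) ∈ A).card := by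
    rw [h2b]
    calc ∑ t ∈ T', ∑ t' ∈ T', (A.filter fun b => b + (t' - t) ∈ A).card
        ≤ T'.card • ∑ t' ∈ T', (A.filter fun b => b + (t' - t0) ∈ A).card :=
          Finset.sum_le_card_nsmul _ _ _ (fun t ht => hmax t ht)
      _ = T'.card * ∑ t' ∈ T', (A.filter fun b => b + (t' - t0) ∈ A).card := by
          rw [smul_eq_mul]
  have h5 : ∑ t' ∈ T', (A.filter fun b => b + (t' - t0) ∈ A).card
      ≤ ∑ u ∈ F', (A.filter fun b => b + u ∈ A).card := by
    have hinj : ∀ x ∈ T', ∀ y ∈ T', x - t0 = y - t0 → x = y := fun x _ y _ h =>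
      sub_left_injective h
    rw [← Finset.sum_image (f := fun u => (A.filter fun b => b + u ∈ A).card)
      (g := fun t' => t' - t0) hinj]
    apply Finset.sum_le_sum_of_subset
    intro u hu
    rw [Finset.mem_image] at hu
    obtain ⟨t', ht', rfl⟩ := hu
    exact hsub _ ht0 _ ht'
  have h7 : (Q.card : ℝ) ≤ (T'.card : ℝ) * ∑ u ∈ F', ((A.filter fun b => b + u ∈ A).card : ℝ) := by
    have h8 := le_trans h6 (Nat.mul_le_mul_left _ h5)
    exact_mod_cast h8
  have hPcard : (P.card : ℝ) = (A.card : ℝ) * T'.card := by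
    rw [hP, Finset.card_product]; push_cast; ring
  calc ((A.card : ℝ) * T'.card) ^ 2 = (P.card : ℝ) ^ 2 := by rw [hPcard]
    _ ≤ (Z.card : ℝ) * (Q.card : ℝ) := hcs
    _ ≤ (Z.card : ℝ) * ((T'.card : ℝ) * ∑ u ∈ F', ((A.filter fun b => b + u ∈ A).card : ℝ)) :=
        mul_le_mul_of_nonneg_left h7 (Nat.cast_nonneg _)
    _ = (Z.card : ℝ) * T'.card * ∑ u ∈ F', ((A.filter fun b => b + u ∈ A).card : ℝ) := by ring

/-- Limsup of a finite sum is at most the sum of limsups, for nonnegative bounded families. -/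
lemma limsup_sum_le {ι : Type*} (s : Finset ι) (h : ι → ℝ → ℝ)
    (hbd : ∀ i ∈ s, IsBoundedUnder (· ≤ ·) atTop (h i))
    (hnn : ∀ i ∈ s, ∀ R, 0 ≤ h i R) :
    limsup (fun R => ∑ i ∈ s, h i R) atTop ≤ ∑ i ∈ s, limsup (h i) atTop := by
  classical
  induction s using Finset.induction_on with
  | empty => simp [limsup_const]
  | @insert a s' ha ih =>
      have hba : IsBoundedUnder (· ≤ ·) atTop (h a) := hbd a (Finset.mem_insert_self _ _)
      have hbs : IsBoundedUnder (· ≤ ·) atTop (fun R => ∑ i ∈ s', h i R) := by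
        have := isBoundedUnder_le_sum (f := atTop) (u := fun i => h i) s'
          (fun i hi => hbd i (Finset.mem_insert_of_mem hi))
        convert this using 1
        funext R
        simp [Finset.sum_apply]
      have hgea : IsBoundedUnder (· ≥ ·) atTop (h a) :=
        ⟨0, eventually_map.mpr (Eventually.of_forall fun R =>
          hnn a (Finset.mem_insert_self _ _) R)⟩
      have hcos : IsCoboundedUnder (· ≤ ·) atTop (fun R => ∑ i ∈ s', h i R) := by
        apply IsBoundedUnder.isCoboundedUnder_le
        exact ⟨0, eventually_map.mpr (Eventually.of_forall fun R =>
          Finset.sum_nonneg fun i hi => hnn i (Finset.mem_insert_of_mem hi) R)⟩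
      have hfun : (fun R => ∑ i ∈ insert a s', h i R) =
          (h a) + (fun R => ∑ i ∈ s', h i R) := by
        funext R
        simp [Finset.sum_insert ha]
      have step := limsup_add_le (f := atTop) (u := h a) (v := fun R => ∑ i ∈ s', h i R)
        hgea hba hcos hbs
      rw [hfun]
      refine le_trans step ?_
      rw [Finset.sum_insert ha]
      exact add_le_add le_rfl (ih (fun i hi => hbd i (Finset.mem_insert_of_mem hi))
        (fun i hi => hnn i (Finset.mem_insert_of_mem hi)))

/-- The volume ratio of balls with radii `R` and `R + c` tends to `1`. -/
lemma ratio_tendsto {c : ℝ} (hc : 0 ≤ c) :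
    Tendsto (fun R : ℝ => (volume (ball (0 : Esp n) R)).toReal /
      (volume (ball (0 : Esp n) (R + c))).toReal) atTop (nhds 1) := by
  have h2 : Tendsto (fun R : ℝ => R + c) atTop atTop :=
    tendsto_atTop_add_const_right _ _ tendsto_id
  have h3 : Tendsto (fun R : ℝ => c / (R + c)) atTop (nhds 0) :=
    tendsto_const_nhds.div_atTop h2
  have h4 : Tendsto (fun R : ℝ => 1 - c / (R + c)) atTop (nhds 1) := by
    have := tendsto_const_nhds (α := ℝ) (x := (1:ℝ)) (f := atTop) |>.sub h3
    simpa using this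
  have h5 : Tendsto (fun R : ℝ => R / (R + c)) atTop (nhds 1) := by
    apply Tendsto.congr' _ h4
    filter_upwards [eventually_gt_atTop (0:ℝ)] with R hR
    have hRc : (0:ℝ) < R + c := by linarith
    field_simp
    ring
  have h1 : Tendsto (fun R : ℝ => (R / (R + c)) ^ n) atTop (nhds 1) := by
    have := h5.pow n
    simpa using this
  apply Tendsto.congr' _ h1
  filter_upwards [eventually_gt_atTop (0:ℝ)] with R hR
  have hRc : (0:ℝ) < R + c := by linarith
  rw [vol_ball_toReal _ hR, vol_ball_toReal _ hRc, div_pow,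
    mul_div_mul_right _ _ (ubv_pos (n := n)).ne']

/-- The set of points of `Γ` whose translate by `u` is also in `Γ`. -/
def Gam (Γ : Set (Esp n)) (u : Esp n) : Set (Esp n) := {x ∈ Γ | x + u ∈ Γ}

lemma freq_eq (Γ : Set (Esp n)) (u : Esp n) : freq Γ u = upDens (Gam Γ u) / upDens Γ := rfl

end MinkWAP

open MinkWAP in
/-- Minkowski theorem for weakly almost periodic subsets of ℤⁿ:
∑_{u∈S} ρ_Γ(u) ≥ D(Γ)·#(S/2 ∩ ℤⁿ). -/
theorem minkowski_wap_int {n : ℕ} (Γ : Set (EuclideanSpace ℝ (Fin n)))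
    (hint : ∀ x ∈ Γ, ∀ i : Fin n, ∃ m : ℤ, x i = (m : ℝ))
    (hwap : WAP Γ)
    (S : Set (EuclideanSpace ℝ (Fin n)))
    (hSconv : Convex ℝ S) (hScomp : IsCompact S) (hSint : (interior S).Nonempty)
    (hSsymm : S = -S) :
    upDens Γ *
        ((((2 : ℝ)⁻¹ • S) ∩ {x : EuclideanSpace ℝ (Fin n) | ∀ i, ∃ m : ℤ, x i = (m : ℝ)}).ncard : ℝ)
      ≤ ∑' u : S, freq Γ (u : EuclideanSpace ℝ (Fin n)) := by
  classical
  have hΓΛ : Γ ⊆ Lat n := fun x hx i => hint x hx i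
  have hGamΛ : ∀ u : EuclideanSpace ℝ (Fin n), Gam Γ u ⊆ Lat n := fun u x hx => hΓΛ hx.1
  have hD0 : 0 ≤ upDens Γ := upDens_nonneg Γ hΓΛ
  have hfreq_nonneg : ∀ u : EuclideanSpace ℝ (Fin n), 0 ≤ freq Γ u := fun u => by
    rw [freq_eq]
    exact div_nonneg (upDens_nonneg _ (hGamΛ u)) hD0
  have hRHS0 : 0 ≤ ∑' u : S, freq Γ (u : EuclideanSpace ℝ (Fin n)) :=
    tsum_nonneg fun u => hfreq_nonneg _
  have hLatEq : {x : EuclideanSpace ℝ (Fin n) | ∀ i, ∃ m : ℤ, x i = (m : ℝ)} = Lat n := rfl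
  rw [hLatEq]
  rcases eq_or_lt_of_le hD0 with hDz | hDpos
  · rw [← hDz, zero_mul]
    exact hRHS0
  -- S is bounded
  obtain ⟨rS, hrS⟩ := hScomp.isBounded.subset_closedBall 0
  obtain ⟨s0, hs0⟩ := hSint
  have hs0S : s0 ∈ S := interior_subset hs0
  have hSnorm : ∀ s ∈ S, ‖s‖ ≤ rS := fun s hs => mem_closedBall_zero_iff.mp (hrS hs)
  have hrS0 : 0 ≤ rS := le_trans (norm_nonneg s0) (hSnorm s0 hs0S)
  -- the sets T and F
  have hTnorm : ∀ t ∈ ((2:ℝ)⁻¹ • S) ∩ Lat n, ‖t‖ ≤ rS := by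
    rintro t ⟨⟨s, hsS, rfl⟩, -⟩
    rw [norm_smul]
    have h1 := hSnorm s hsS
    have h2 : ‖(2:ℝ)⁻¹‖ = 2⁻¹ := by norm_num
    rw [h2]
    nlinarith [norm_nonneg s]
  have hTfin : (((2:ℝ)⁻¹ • S) ∩ Lat n).Finite := by
    apply (lat_finite_inter_ball (0 : Esp n) (rS + 1)).subset
    rintro t ⟨ht1, ht2⟩
    refine ⟨ht2, ?_⟩
    rw [mem_ball_zero_iff]
    have := hTnorm t ⟨ht1, ht2⟩
    linarith
  have hFfin : (S ∩ Lat n).Finite := by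
    apply (lat_finite_inter_ball (0 : Esp n) (rS + 1)).subset
    rintro t ⟨ht1, ht2⟩
    refine ⟨ht2, ?_⟩
    rw [mem_ball_zero_iff]
    have := hSnorm t ht1
    linarith
  set T' : Finset (EuclideanSpace ℝ (Fin n)) := hTfin.toFinset with hT'def
  set F' : Finset (EuclideanSpace ℝ (Fin n)) := hFfin.toFinset with hF'def
  -- tsum reduction
  have hzero : ∀ u : S, (u : EuclideanSpace ℝ (Fin n)) ∉ F' → freq Γ (u : EuclideanSpace ℝ (Fin n)) = 0 := by
    intro u hu
    have huΛ : (u : EuclideanSpace ℝ (Fin n)) ∉ Lat n := by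
      intro hL
      exact hu (hFfin.mem_toFinset.mpr ⟨u.2, hL⟩)
    have hempty : Gam Γ (u : EuclideanSpace ℝ (Fin n)) = ∅ := by
      ext x
      simp only [Gam, Set.mem_setOf_eq, Set.mem_empty_iff_false, iff_false, not_and]
      intro hx1 hx2
      apply huΛ
      have := lat_sub (hΓΛ hx2) (hΓΛ hx1)
      rwa [add_sub_cancel_left] at this
    rw [freq_eq, hempty, upDens_empty, zero_div]
  have htsum : (∑' u : S, freq Γ (u : EuclideanSpace ℝ (Fin n))) = ∑ u ∈ F', freq Γ u := by
    rw [tsum_eq_sum (s := F'.subtype (· ∈ S)) ?_]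
    · exact Finset.sum_subtype_of_mem _ (fun x hx => (hFfin.mem_toFinset.mp hx).1)
    · intro b hb
      apply hzero
      intro hmem
      exact hb (Finset.mem_subtype.mpr hmem)
  rw [htsum]
  -- trivial case: T' empty
  rcases Finset.eq_empty_or_nonempty T' with hTe | hT'ne
  · have hTempty : ((2:ℝ)⁻¹ • S) ∩ Lat n = ∅ := Set.Finite.toFinset_eq_empty.mp hTe
    rw [hTempty]
    simp only [Set.ncard_empty, Nat.cast_zero, mul_zero]
    rw [← htsum]
    exact hRHS0
  -- main case
  have hTc : ((((2:ℝ)⁻¹ • S) ∩ Lat n).ncard : ℝ) = (T'.card : ℝ) := by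
    rw [Set.ncard_eq_toFinset_card _ hTfin]
  have hTcpos : (0:ℝ) < (T'.card : ℝ) := by
    have := Finset.card_pos.mpr hT'ne
    exact_mod_cast this
  -- rewrite the sum of frequencies
  have hsum_eq : ∑ u ∈ F', freq Γ u = (∑ u ∈ F', upDens (Gam Γ u)) / upDens Γ := by
    rw [Finset.sum_div]
    exact Finset.sum_congr rfl fun u _ => freq_eq Γ u
  rw [hsum_eq, le_div_iff₀ hDpos, hTc]
  -- now: upDens Γ * T'.card * upDens Γ ≤ ∑ u ∈ F', upDens (Gam Γ u)
  set c : ℝ := rS + cc n with hcdef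
  have hc0 : 0 ≤ c := by
    have := cc_pos (n := n)
    rw [hcdef]; linarith
  -- the summed density function
  have hgbd : ∀ u ∈ F', IsBoundedUnder (· ≤ ·) atTop (densR (Gam Γ u)) :=
    fun u _ => densR_boundedUnder _ (hGamΛ u)
  have hgbdd : IsBoundedUnder (· ≤ ·) atTop (fun R => ∑ u ∈ F', densR (Gam Γ u) R) := by
    have h := isBoundedUnder_le_sum (f := atTop) (u := fun u => densR (Gam Γ u)) F' hgbd
    convert h using 1
    funext R
    simp [Finset.sum_apply]
  have hstepA : limsup (fun R => ∑ u ∈ F', densR (Gam Γ u) R) atTop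
      ≤ ∑ u ∈ F', upDens (Gam Γ u) :=
    limsup_sum_le F' (fun u => densR (Gam Γ u)) hgbd (fun u _ R => densR_nonneg _ _)
  -- Step B : the key frequent lower bound
  have key : ∀ δ : ℝ, 0 < δ → δ < upDens Γ → δ < 1 →
      (upDens Γ - δ)^2 * (T'.card : ℝ) * (1 - δ)
        ≤ limsup (fun R => ∑ u ∈ F', densR (Gam Γ u) R) atTop := by
    intro δ hδ0 hδD hδ1
    apply le_limsup_of_frequently_le _ hgbdd
    have hco : IsCoboundedUnder (· ≤ ·) atTop (densR Γ) :=
      IsBoundedUnder.isCoboundedUnder_le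
        ⟨0, eventually_map.mpr (Eventually.of_forall fun R => densR_nonneg Γ R)⟩
    have hfreqD : ∃ᶠ R in atTop, upDens Γ - δ < densR Γ R :=
      frequently_lt_of_lt_limsup hco
        (show upDens Γ - δ < limsup (densR Γ) atTop from by
          rw [show limsup (densR Γ) atTop = upDens Γ from rfl]; linarith)
    have hev : ∀ᶠ R in atTop, 1 ≤ R ∧ 1 - δ ≤ (volume (ball (0 : Esp n) R)).toReal /
        (volume (ball (0 : Esp n) (R + c))).toReal := by
      filter_upwards [eventually_ge_atTop (1:ℝ),
        (ratio_tendsto (n := n) hc0).eventually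
          (eventually_gt_nhds (show 1 - δ < 1 by linarith))] with R h1 h2
      exact ⟨h1, h2.le⟩
    refine (hfreqD.and_eventually hev).mono ?_
    rintro R ⟨hRD, hR1, hRr⟩
    have hRpos : (0:ℝ) < R := lt_of_lt_of_le one_pos hR1
    rw [densR] at hRD
    obtain ⟨x, hx⟩ := exists_lt_of_lt_ciSup hRD
    have hV : 0 < (volume (ball x R)).toReal := vol_ball_toReal_pos x hRpos
    have hAfin : (Γ ∩ ball x R).Finite :=
      (lat_finite_inter_ball x R).subset (Set.inter_subset_inter_left _ hΓΛ)
    have hZfin : (Lat n ∩ ball x (R + rS)).Finite := lat_finite_inter_ball x (R + rS)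
    have hAcard : ((hAfin.toFinset.card : ℕ) : ℝ) = ((Γ ∩ ball x R).ncard : ℝ) := by
      rw [Set.ncard_eq_toFinset_card _ hAfin]
    have hAT : ∀ a ∈ hAfin.toFinset, ∀ t ∈ T', a + t ∈ hZfin.toFinset := by
      intro a ha t ht
      rw [Set.Finite.mem_toFinset] at ha ⊢
      rw [hT'def, Set.Finite.mem_toFinset] at ht
      refine ⟨lat_add (hΓΛ ha.1) ht.2, ?_⟩
      rw [mem_ball]
      have h1 : dist (a + t) x ≤ dist a x + ‖t‖ := by
        rw [dist_eq_norm, dist_eq_norm]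
        calc ‖a + t - x‖ = ‖a - x + t‖ := by rw [add_sub_right_comm]
          _ ≤ ‖a - x‖ + ‖t‖ := norm_add_le _ _
      have h2 : ‖t‖ ≤ rS := hTnorm t ht
      have h3 : dist a x < R := mem_ball.mp ha.2
      linarith
    have hsubTF : ∀ t ∈ T', ∀ t' ∈ T', t' - t ∈ F' := by
      intro t ht t' ht'
      rw [hT'def, Set.Finite.mem_toFinset] at ht ht'
      rw [hF'def, Set.Finite.mem_toFinset]
      obtain ⟨⟨s, hsS, rfl⟩, htΛ⟩ := ht
      obtain ⟨⟨s', hs'S, rfl⟩, ht'Λ⟩ := ht'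
      refine ⟨?_, lat_sub ht'Λ htΛ⟩
      have hns : -s ∈ S := by rw [hSsymm]; exact Set.neg_mem_neg.mpr hsS
      have hconv := hSconv hs'S hns (by norm_num : (0:ℝ) ≤ 2⁻¹) (by norm_num : (0:ℝ) ≤ 2⁻¹)
        (by norm_num : (2:ℝ)⁻¹ + 2⁻¹ = 1)
      have hrw : (2:ℝ)⁻¹ • s' - (2:ℝ)⁻¹ • s = (2:ℝ)⁻¹ • s' + (2:ℝ)⁻¹ • (-s) := by
        rw [smul_neg, ← sub_eq_add_neg]
      rw [hrw]
      exact hconv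
    have hcc := count_core hAfin.toFinset T' hZfin.toFinset F' hAT hsubTF hT'ne
    have hcposR : (0:ℝ) < R + c := by linarith
    have hW : 0 < (volume (ball x (R + c))).toReal := vol_ball_toReal_pos x hcposR
    have hZle : ((hZfin.toFinset.card : ℕ) : ℝ) ≤ (volume (ball x (R + c))).toReal := by
      have h1 : ((Lat n ∩ ball x (R + rS)).ncard : ℝ)
          ≤ (volume (ball x ((R + rS) + cc n))).toReal :=
        lat_card_le (Lat n) (fun y hy => hy) x (R + rS)
      rw [Set.ncard_eq_toFinset_card _ hZfin] at h1
      have h2 : R + rS + cc n = R + c := by rw [hcdef]; ring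
      rwa [h2] at h1
    have hGfin : ∀ u : EuclideanSpace ℝ (Fin n), (Gam Γ u ∩ ball x R).Finite := fun u =>
      hAfin.subset (Set.inter_subset_inter_left _ (fun y hy => hy.1))
    have hcnt : ∀ u ∈ F', ((hAfin.toFinset.filter fun b => b + u ∈ hAfin.toFinset).card : ℝ)
        ≤ densR (Gam Γ u) R * (volume (ball x R)).toReal := by
      intro u _
      have hsub2 : (hAfin.toFinset.filter fun b => b + u ∈ hAfin.toFinset)
          ⊆ (hGfin u).toFinset := by
        intro b hb
        rw [Finset.mem_filter, Set.Finite.mem_toFinset] at hb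
        rw [Set.Finite.mem_toFinset]
        rw [Set.Finite.mem_toFinset] at hb
        exact ⟨⟨hb.1.1, (hb.2).1⟩, hb.1.2⟩
      have hcard : ((hAfin.toFinset.filter fun b => b + u ∈ hAfin.toFinset).card : ℝ)
          ≤ ((Gam Γ u ∩ ball x R).ncard : ℝ) := by
        rw [Set.ncard_eq_toFinset_card _ (hGfin u)]
        exact_mod_cast Finset.card_le_card hsub2
      have hdens := densR_ge (Gam Γ u) (hGamΛ u) R x
      have := (div_le_iff₀ hV).mp hdens
      linarith
    have hsum : ∑ u ∈ F', ((hAfin.toFinset.filter fun b => b + u ∈ hAfin.toFinset).card : ℝ)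
        ≤ (∑ u ∈ F', densR (Gam Γ u) R) * (volume (ball x R)).toReal := by
      rw [Finset.sum_mul]
      exact Finset.sum_le_sum hcnt
    -- algebra
    have h1 : (upDens Γ - δ) * (volume (ball x R)).toReal ≤ ((Γ ∩ ball x R).ncard : ℝ) :=
      ((lt_div_iff₀ hV).mp hx).le
    have h2 : (1 - δ) * (volume (ball x (R + c))).toReal ≤ (volume (ball x R)).toReal := by
      have hVc : (volume (ball x R)).toReal = (volume (ball (0 : Esp n) R)).toReal := by
        rw [vol_ball_center]
      have hWc : (volume (ball x (R + c))).toReal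
          = (volume (ball (0 : Esp n) (R + c))).toReal := by
        rw [vol_ball_center]
      rw [hVc, hWc]
      have hW0 : 0 < (volume (ball (0 : Esp n) (R + c))).toReal := by rwa [← hWc]
      exact (le_div_iff₀ hW0).mp hRr
    have hgnn : 0 ≤ ∑ u ∈ F', densR (Gam Γ u) R :=
      Finset.sum_nonneg fun u _ => densR_nonneg _ _
    have e1 : ((upDens Γ - δ) * (volume (ball x R)).toReal) * (T'.card : ℝ)
        ≤ ((Γ ∩ ball x R).ncard : ℝ) * (T'.card : ℝ) :=
      mul_le_mul_of_nonneg_right h1 (Nat.cast_nonneg _)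
    have e1nn : 0 ≤ (upDens Γ - δ) * (volume (ball x R)).toReal * (T'.card : ℝ) := by
      have : 0 ≤ upDens Γ - δ := by linarith
      exact mul_nonneg (mul_nonneg this hV.le) (Nat.cast_nonneg _)
    have e2 : ((upDens Γ - δ) * (volume (ball x R)).toReal * (T'.card : ℝ))^2
        ≤ (((Γ ∩ ball x R).ncard : ℝ) * (T'.card : ℝ))^2 :=
      pow_le_pow_left₀ e1nn e1 2
    have f2 : ((upDens Γ - δ) * (volume (ball x R)).toReal * (T'.card : ℝ))^2
        ≤ (volume (ball x (R + c))).toReal * (T'.card : ℝ)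
          * ((∑ u ∈ F', densR (Gam Γ u) R) * (volume (ball x R)).toReal) := by
      refine e2.trans ?_
      rw [← hAcard] at *
      calc ((hAfin.toFinset.card : ℝ) * (T'.card : ℝ))^2
          ≤ (hZfin.toFinset.card : ℝ) * (T'.card : ℝ)
            * ∑ u ∈ F', ((hAfin.toFinset.filter fun b => b + u ∈ hAfin.toFinset).card : ℝ) := hcc
        _ ≤ (volume (ball x (R + c))).toReal * (T'.card : ℝ)
            * ∑ u ∈ F', ((hAfin.toFinset.filter fun b => b + u ∈ hAfin.toFinset).card : ℝ) := by
            apply mul_le_mul_of_nonneg_right _ (Finset.sum_nonneg fun u _ => Nat.cast_nonneg _)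
            exact mul_le_mul_of_nonneg_right hZle (Nat.cast_nonneg _)
        _ ≤ (volume (ball x (R + c))).toReal * (T'.card : ℝ)
            * ((∑ u ∈ F', densR (Gam Γ u) R) * (volume (ball x R)).toReal) := by
            apply mul_le_mul_of_nonneg_left hsum
            exact mul_nonneg hW.le (Nat.cast_nonneg _)
    have hδD' : 0 ≤ upDens Γ - δ := by linarith
    have f1 := mul_le_mul_of_nonneg_left h2
      (show (0:ℝ) ≤ (upDens Γ - δ)^2 * (T'.card : ℝ)^2 * (volume (ball x R)).toReal from
        mul_nonneg (mul_nonneg (sq_nonneg _) (sq_nonneg _)) hV.le)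
    have hfinal : ((upDens Γ - δ)^2 * (T'.card : ℝ) * (1 - δ))
          * ((volume (ball x (R + c))).toReal * (T'.card : ℝ) * (volume (ball x R)).toReal)
        ≤ (∑ u ∈ F', densR (Gam Γ u) R)
          * ((volume (ball x (R + c))).toReal * (T'.card : ℝ) * (volume (ball x R)).toReal) := by
      calc ((upDens Γ - δ)^2 * (T'.card : ℝ) * (1 - δ))
            * ((volume (ball x (R + c))).toReal * (T'.card : ℝ) * (volume (ball x R)).toReal)
          = ((upDens Γ - δ)^2 * (T'.card : ℝ)^2 * (volume (ball x R)).toReal)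
            * ((1 - δ) * (volume (ball x (R + c))).toReal) := by ring
        _ ≤ ((upDens Γ - δ)^2 * (T'.card : ℝ)^2 * (volume (ball x R)).toReal)
            * (volume (ball x R)).toReal := f1
        _ = ((upDens Γ - δ) * (volume (ball x R)).toReal * (T'.card : ℝ))^2 := by ring
        _ ≤ (volume (ball x (R + c))).toReal * (T'.card : ℝ)
            * ((∑ u ∈ F', densR (Gam Γ u) R) * (volume (ball x R)).toReal) := f2
        _ = (∑ u ∈ F', densR (Gam Γ u) R)
            * ((volume (ball x (R + c))).toReal * (T'.card : ℝ) * (volume (ball x R)).toReal) := by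
            ring
    exact le_of_mul_le_mul_right hfinal (mul_pos (mul_pos hW hTcpos) hV)
  -- pass to the limit δ → 0⁺
  have hlim : Tendsto (fun δ : ℝ => (upDens Γ - δ)^2 * (T'.card : ℝ) * (1 - δ))
      (nhdsWithin 0 (Set.Ioi 0)) (nhds ((upDens Γ)^2 * (T'.card : ℝ))) := by
    have hcont : Continuous fun δ : ℝ => (upDens Γ - δ)^2 * (T'.card : ℝ) * (1 - δ) :=
      (((continuous_const.sub continuous_id).pow 2).mul continuous_const).mul
        (continuous_const.sub continuous_id)
    have h0 := hcont.tendsto 0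
    have heq : (upDens Γ - 0)^2 * (T'.card : ℝ) * (1 - 0) = (upDens Γ)^2 * (T'.card : ℝ) := by
      ring
    rw [heq] at h0
    exact h0.mono_left nhdsWithin_le_nhds
  have hev2 : ∀ᶠ δ in nhdsWithin (0:ℝ) (Set.Ioi 0),
      (upDens Γ - δ)^2 * (T'.card : ℝ) * (1 - δ)
        ≤ limsup (fun R => ∑ u ∈ F', densR (Gam Γ u) R) atTop := by
    have hmin : (0:ℝ) < min (upDens Γ) 1 := lt_min hDpos one_pos
    filter_upwards [Ioo_mem_nhdsGT_of_mem (Set.mem_Ico.mpr ⟨le_refl (0:ℝ), hmin⟩)] with δ hδ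
    exact key δ hδ.1 (lt_of_lt_of_le hδ.2 (min_le_left _ _))
      (lt_of_lt_of_le hδ.2 (min_le_right _ _))
  have hB : (upDens Γ)^2 * (T'.card : ℝ)
      ≤ limsup (fun R => ∑ u ∈ F', densR (Gam Γ u) R) atTop := le_of_tendsto hlim hev2
  calc upDens Γ * (T'.card : ℝ) * upDens Γ = (upDens Γ)^2 * (T'.card : ℝ) := by ring
    _ ≤ limsup (fun R => ∑ u ∈ F', densR (Gam Γ u) R) atTop := hB
    _ ≤ ∑ u ∈ F', upDens (Gam Γ u) := hstepA
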